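/- Let P ∈ ℝ^{d×d} with ‖P‖₂ ≤ 1 and β ∈ [0,1]. The 3d×3d symmetric matrix M = [[I_d, P, −P],[Pᵀ, I_d, βI_d],[−Pᵀ, βI_d, I_d]] is positive semi-definite if and only if ‖P‖₂² ≤ (1−β)/2. -/

import Mathlib

open Matrix

/-- The spectral (ℓ²-operator) norm of a square real matrix. -/
noncomputable def specNorm {d : ℕ} (A : Matrix (Fin d) (Fin d) ℝ) : ℝ :=
  ‖Matrix.toEuclideanCLM (𝕜 := ℝ) A‖

/-- The `3d × 3d` block matrix `[[I, P, −P], [Pᵀ, I, βI], [−Pᵀ, βI, I]]`. -/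
noncomputable def blockM {d : ℕ} (P : Matrix (Fin d) (Fin d) ℝ) (β : ℝ) :
    Matrix (Fin 3 × Fin d) (Fin 3 × Fin d) ℝ :=
  fun p q =>
    (![![1, P, -P],
       ![Pᵀ, 1, β • (1 : Matrix (Fin d) (Fin d) ℝ)],
       ![-Pᵀ, β • (1 : Matrix (Fin d) (Fin d) ℝ), 1]] p.1 q.1) p.2 q.2

lemma norm_ee_sq {d : ℕ} (v : Fin d → ℝ) :
    ‖(WithLp.equiv 2 (Fin d → ℝ)).symm v‖ ^ 2 = v ⬝ᵥ v := by
  rw [EuclideanSpace.norm_eq, Real.sq_sqrt (by positivity)]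
  simp [dotProduct, sq]

lemma inner_ee {d : ℕ} (a u : Fin d → ℝ) :
    (inner ℝ ((WithLp.equiv 2 (Fin d → ℝ)).symm a) ((WithLp.equiv 2 (Fin d → ℝ)).symm u) : ℝ)
      = a ⬝ᵥ u := by
  simp [PiLp.inner_apply, dotProduct]
  exact Finset.sum_congr rfl fun i _ => mul_comm _ _

lemma dot_mulVec_bound {d : ℕ} (P : Matrix (Fin d) (Fin d) ℝ) (a w : Fin d → ℝ) :
    |a ⬝ᵥ (P *ᵥ w)| ≤ specNorm P * (‖(WithLp.equiv 2 (Fin d → ℝ)).symm a‖ *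
      ‖(WithLp.equiv 2 (Fin d → ℝ)).symm w‖) := by
  have h1 : (toEuclideanCLM (𝕜 := ℝ) P) ((WithLp.equiv 2 (Fin d → ℝ)).symm w)
      = (WithLp.equiv 2 (Fin d → ℝ)).symm (P *ᵥ w) := by
    rfl
  calc |a ⬝ᵥ (P *ᵥ w)|
      = |(inner ℝ ((WithLp.equiv 2 (Fin d → ℝ)).symm a)
          ((toEuclideanCLM (𝕜 := ℝ) P) ((WithLp.equiv 2 (Fin d → ℝ)).symm w)) : ℝ)| := by
        rw [h1, inner_ee]
    _ ≤ ‖(WithLp.equiv 2 (Fin d → ℝ)).symm a‖ *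
          ‖(toEuclideanCLM (𝕜 := ℝ) P) ((WithLp.equiv 2 (Fin d → ℝ)).symm w)‖ :=
        abs_real_inner_le_norm _ _
    _ ≤ ‖(WithLp.equiv 2 (Fin d → ℝ)).symm a‖ *
          (specNorm P * ‖(WithLp.equiv 2 (Fin d → ℝ)).symm w‖) := by
        gcongr
        exact (toEuclideanCLM (𝕜 := ℝ) P).le_opNorm _
    _ = _ := by ring

lemma quadform {d : ℕ} (P : Matrix (Fin d) (Fin d) ℝ) (β : ℝ) (a b c : Fin d → ℝ) :
    (fun p : Fin 3 × Fin d => ![a, b, c] p.1 p.2) ⬝ᵥ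
      blockM P β *ᵥ (fun p : Fin 3 × Fin d => ![a, b, c] p.1 p.2)
    = a ⬝ᵥ a + b ⬝ᵥ b + c ⬝ᵥ c + 2*(a ⬝ᵥ (P *ᵥ b)) - 2*(a ⬝ᵥ (P *ᵥ c)) + 2*β*(b ⬝ᵥ c) := by
  simp only [dotProduct, mulVec, blockM, Fintype.sum_prod_type, Fin.sum_univ_three,
    Matrix.cons_val_zero, Matrix.cons_val_one, Matrix.head_cons, Matrix.cons_val_two,
    Matrix.tail_cons, Matrix.one_apply, Matrix.transpose_apply, Matrix.neg_apply,
    Matrix.smul_apply, smul_eq_mul, mul_ite, mul_one, mul_zero, ite_mul, zero_mul,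
    Finset.sum_ite_eq, Finset.mem_univ, if_true, Finset.mul_sum, Finset.sum_add_distrib]
  simp only [mul_add, Finset.mul_sum, Finset.sum_add_distrib, one_mul, mul_one, mul_neg,
    neg_mul, Finset.sum_neg_distrib, Finset.sum_sub_distrib]
  rw [Finset.sum_comm (f := fun x x_1 => b x * (P x_1 x * a x_1)),
      Finset.sum_comm (f := fun x x_1 => c x * (P x_1 x * a x_1))]
  have h1 : ∀ v : Fin d → ℝ, (∑ x : Fin d, ∑ x_1 : Fin d, v x_1 * (P x x_1 * a x))
      = ∑ x : Fin d, ∑ x_1 : Fin d, a x * (P x x_1 * v x_1) := fun v =>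
    Finset.sum_congr rfl fun x _ => Finset.sum_congr rfl fun y _ => by ring
  rw [h1 b, h1 c]
  have h2 : ∀ v : Fin d → ℝ, (∑ x : Fin d, ∑ i : Fin d, 2 * (a x * (P x i * v i)))
      = 2 * ∑ x : Fin d, ∑ i : Fin d, a x * (P x i * v i) := fun v => by
    rw [Finset.mul_sum]
    exact Finset.sum_congr rfl fun x _ => (Finset.mul_sum _ _ _).symm
  have h3 : (∑ i : Fin d, 2 * β * (b i * c i))
      = ∑ x : Fin d, b x * (β * c x) + ∑ x : Fin d, c x * (β * b x) := by
    rw [← Finset.sum_add_distrib]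
    exact Finset.sum_congr rfl fun x _ => by ring
  rw [h2 b, h2 c, h3]
  ring

lemma blockM_herm {d : ℕ} (P : Matrix (Fin d) (Fin d) ℝ) (β : ℝ) :
    (blockM P β).IsHermitian := by
  ext ⟨i, j⟩ ⟨k, l⟩
  simp only [conjTranspose_apply, star_trivial]
  fin_cases i <;> fin_cases k <;>
    simp [blockM, Matrix.one_apply, Matrix.transpose_apply, eq_comm]

/-- With `‖P‖₂ ≤ 1` and `β ∈ [0,1]`, the block matrix
`[[I, P, −P], [Pᵀ, I, βI], [−Pᵀ, βI, I]]` is positive semi-definite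
if and only if `‖P‖₂² ≤ (1−β)/2`. -/
theorem stmt7 {d : ℕ} (P : Matrix (Fin d) (Fin d) ℝ) (β : ℝ)
    (hP : specNorm P ≤ 1) (hβ : β ∈ Set.Icc (0 : ℝ) 1) :
    (blockM P β).PosSemidef ↔ specNorm P ^ 2 ≤ (1 - β) / 2 := by
  obtain ⟨hβ0, hβ1⟩ := hβ
  constructor
  · -- forward
    intro hM
    obtain ⟨-, hpos⟩ := posSemidef_iff_dotProduct_mulVec.mp hM
    -- key: ∀ u, (P *ᵥ u) ⬝ᵥ (P *ᵥ u) ≤ (1-β)/2 * (u ⬝ᵥ u)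
    have key : ∀ u : Fin d → ℝ, (P *ᵥ u) ⬝ᵥ (P *ᵥ u) ≤ (1 - β) / 2 * (u ⬝ᵥ u) := by
      intro u
      set a : Fin d → ℝ := (-2 : ℝ) • (P *ᵥ u) with ha
      set x : Fin 3 × Fin d → ℝ := fun p => ![a, u, -u] p.1 p.2 with hx
      have hsx : star x = x := by funext p; exact star_trivial _
      have h := hpos x
      rw [hsx, hx, quadform] at h
      have e1 : a ⬝ᵥ a = 4 * ((P *ᵥ u) ⬝ᵥ (P *ᵥ u)) := by
        simp [ha, smul_dotProduct, dotProduct_smul, smul_eq_mul]; ring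
      have e2 : a ⬝ᵥ (P *ᵥ u) = -2 * ((P *ᵥ u) ⬝ᵥ (P *ᵥ u)) := by
        simp [ha, smul_dotProduct, smul_eq_mul]
      have e3 : a ⬝ᵥ (P *ᵥ (-u)) = 2 * ((P *ᵥ u) ⬝ᵥ (P *ᵥ u)) := by
        rw [Matrix.mulVec_neg, dotProduct_neg, e2]; ring
      have e4 : u ⬝ᵥ (-u) = -(u ⬝ᵥ u) := by simp [dotProduct_neg]
      have e5 : (-u) ⬝ᵥ (-u) = u ⬝ᵥ u := by simp [dotProduct_neg, neg_dotProduct]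
      rw [e1, e2, e3, e4, e5] at h
      nlinarith [h]
    -- conclude on operator norm
    have hc : (0:ℝ) ≤ (1 - β) / 2 := by linarith
    have hle : specNorm P ≤ Real.sqrt ((1 - β) / 2) := by
      apply ContinuousLinearMap.opNorm_le_bound _ (Real.sqrt_nonneg _)
      intro v
      set u : Fin d → ℝ := WithLp.equiv 2 (Fin d → ℝ) v with hu
      have hv : v = (WithLp.equiv 2 (Fin d → ℝ)).symm u := rfl
      have hTv : (toEuclideanCLM (𝕜 := ℝ) P) v = (WithLp.equiv 2 (Fin d → ℝ)).symm (P *ᵥ u) := by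
        rfl
      have h1 : ‖(toEuclideanCLM (𝕜 := ℝ) P) v‖ ^ 2 ≤ (1 - β) / 2 * ‖v‖ ^ 2 := by
        rw [hTv, norm_ee_sq, hv, norm_ee_sq]
        exact key u
      calc ‖(toEuclideanCLM (𝕜 := ℝ) P) v‖
          = Real.sqrt (‖(toEuclideanCLM (𝕜 := ℝ) P) v‖ ^ 2) := by
            rw [Real.sqrt_sq (norm_nonneg _)]
        _ ≤ Real.sqrt ((1 - β) / 2 * ‖v‖ ^ 2) := Real.sqrt_le_sqrt h1
        _ = Real.sqrt ((1 - β) / 2) * ‖v‖ := by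
            rw [Real.sqrt_mul hc, Real.sqrt_sq (norm_nonneg _)]
    have h2 : specNorm P ^ 2 ≤ Real.sqrt ((1 - β) / 2) ^ 2 :=
      pow_le_pow_left₀ (norm_nonneg _) hle 2
    rwa [Real.sq_sqrt hc] at h2
  · -- backward
    intro hσ
    refine posSemidef_iff_dotProduct_mulVec.mpr ⟨blockM_herm P β, fun x => ?_⟩
    have hsx : star x = x := by funext p; exact star_trivial _
    rw [hsx]
    set a : Fin d → ℝ := fun i => x (0, i) with ha
    set b : Fin d → ℝ := fun i => x (1, i) with hb
    set c : Fin d → ℝ := fun i => x (2, i) with hc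
    have hx : x = fun p : Fin 3 × Fin d => ![a, b, c] p.1 p.2 := by
      funext ⟨i, j⟩; fin_cases i <;> rfl
    rw [hx, quadform]
    set σ := specNorm P with hσdef
    have hσ0 : 0 ≤ σ := norm_nonneg _
    set na := ‖(WithLp.equiv 2 (Fin d → ℝ)).symm a‖ with hna
    set nw := ‖(WithLp.equiv 2 (Fin d → ℝ)).symm (b - c)‖ with hnw
    set ns := ‖(WithLp.equiv 2 (Fin d → ℝ)).symm (b + c)‖ with hns
    have hna2 : na ^ 2 = a ⬝ᵥ a := norm_ee_sq a
    have hnw2 : nw ^ 2 = b ⬝ᵥ b - 2 * (b ⬝ᵥ c) + c ⬝ᵥ c := by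
      rw [hnw, norm_ee_sq]
      simp only [dotProduct_sub, sub_dotProduct]
      rw [dotProduct_comm c b]; ring
    have hns2 : ns ^ 2 = b ⬝ᵥ b + 2 * (b ⬝ᵥ c) + c ⬝ᵥ c := by
      rw [hns, norm_ee_sq]
      simp only [dotProduct_add, add_dotProduct]
      rw [dotProduct_comm c b]; ring
    have hsub : a ⬝ᵥ (P *ᵥ b) - a ⬝ᵥ (P *ᵥ c) = a ⬝ᵥ (P *ᵥ (b - c)) := by
      rw [Matrix.mulVec_sub, dotProduct_sub]
    have hbd := dot_mulVec_bound P a (b - c)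
    rw [← hna, ← hnw, ← hσdef] at hbd
    have hbd' : -(σ * (na * nw)) ≤ a ⬝ᵥ (P *ᵥ (b - c)) := neg_le_of_abs_le hbd
    have h0na : 0 ≤ na := norm_nonneg _
    have h0nw : 0 ≤ nw := norm_nonneg _
    have h0ns : 0 ≤ ns := norm_nonneg _
    nlinarith [sq_nonneg (na - σ * nw), sq_nonneg nw, sq_nonneg ns,
      mul_nonneg (mul_nonneg hβ0 h0ns) h0ns,
      mul_le_mul_of_nonneg_right hσ (sq_nonneg nw)]
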